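/- arXiv:1805.08457 — 2 statements merged into one kernel-verified Lean document; each statement's English description precedes it below -/
import Mathlib

section
/- Let Y = [y_{ij}] ∈ ℝ^{m×m} satisfy y_{ii} = −Σ_{j≠i} y_{ij} for every i (so that Y·𝟙 = 0, where 𝟙 = (1,…,1)ᵀ). Suppose min_{i≠j} { y_{ij} + y_{ji} + Σ_{k≠i,j} min(y_{ik}, y_{jk}) } > 0. Then 0 is a simple eigenvalue of Y (algebraic multiplicity one) and every nonzero eigenvalue of Y has negative real part. -/
open scoped BigOperators
open Matrix


lemma sum_split {m : ℕ} {α : Type*} [AddCommMonoid α] (i j : Fin m) (hij : i ≠ j) (F : Fin m → α) :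
    ∑ k, F k = F i + F j + ∑ k ∈ Finset.univ.filter (fun k => k ≠ i ∧ k ≠ j), F k := by
  have h1 : (Finset.univ.erase i).erase j = Finset.univ.filter (fun k => k ≠ i ∧ k ≠ j) := by
    ext k; simp [Finset.mem_erase, and_comm]
  rw [← h1, add_assoc, Finset.add_sum_erase _ F (by simp [Finset.mem_erase, Ne.symm hij]),
    Finset.add_sum_erase _ F (Finset.mem_univ i)]

-- the algebraic identity
lemma key_identity {m : ℕ} (Y : Matrix (Fin m) (Fin m) ℝ)
    (hzero : ∀ i, ∑ k, Y i k = 0) (i j : Fin m) (hij : i ≠ j) (x : Fin m → ℂ) :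
    ∑ k, ((Y i k : ℂ) - (Y j k : ℂ)) * x k
      = -((Y i j : ℂ) + (Y j i : ℂ) + ((∑ k ∈ Finset.univ.filter (fun k => k ≠ i ∧ k ≠ j), min (Y i k) (Y j k) : ℝ) : ℂ)) * (x i - x j)
        + ∑ k ∈ Finset.univ.filter (fun k => k ≠ i ∧ k ≠ j),
            (((Y i k - min (Y i k) (Y j k) : ℝ) : ℂ) * (x k - x i)
              + ((Y j k - min (Y i k) (Y j k) : ℝ) : ℂ) * (x j - x k)) := by
  set S := Finset.univ.filter (fun k => k ≠ i ∧ k ≠ j) with hS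
  have hri : (∑ k ∈ S, Y i k : ℝ) = -(Y i i) - (Y i j) := by
    have := hzero i
    rw [sum_split i j hij (fun k => Y i k)] at this
    linarith
  have hrj : (∑ k ∈ S, Y j k : ℝ) = -(Y j j) - (Y j i) := by
    have := hzero j
    rw [sum_split i j hij (fun k => Y j k)] at this
    linarith
  rw [sum_split i j hij (fun k => ((Y i k : ℂ) - (Y j k : ℂ)) * x k)]
  have expand : ∀ k ∈ S,
      ((Y i k - min (Y i k) (Y j k) : ℝ) : ℂ) * (x k - x i)
        + ((Y j k - min (Y i k) (Y j k) : ℝ) : ℂ) * (x j - x k)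
      = ((Y i k : ℂ) - (Y j k : ℂ)) * x k - (Y i k : ℂ) * x i + (Y j k : ℂ) * x j
          + ((min (Y i k) (Y j k) : ℝ) : ℂ) * (x i - x j) := by
    intro k _
    push_cast
    ring
  rw [Finset.sum_congr rfl expand]
  simp only [Finset.sum_add_distrib, Finset.sum_sub_distrib, ← Finset.sum_mul]
  rw [← Complex.ofReal_sum S (fun k => Y i k), ← Complex.ofReal_sum S (fun k => Y j k), hri, hrj]
  push_cast
  ring

lemma key_ineq {m : ℕ} (Y : Matrix (Fin m) (Fin m) ℝ)
    (hzero : ∀ i, ∑ k, Y i k = 0)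
    (hmin : ∀ i j : Fin m, i ≠ j →
      0 < Y i j + Y j i +
        ∑ k ∈ Finset.univ.filter (fun k => k ≠ i ∧ k ≠ j), min (Y i k) (Y j k))
    (x : Fin m → ℂ) (a b : Fin m) (hab : x a ≠ x b) :
    ∃ i j : Fin m, x i ≠ x j ∧
      ((starRingEnd ℂ) (x i - x j) * (∑ k, ((Y i k : ℂ) - (Y j k : ℂ)) * x k)).re < 0 := by
  obtain ⟨p, -, hp⟩ := Finset.exists_max_image Finset.univ
    (fun p : Fin m × Fin m => ‖x p.1 - x p.2‖) ⟨(a, b), Finset.mem_univ _⟩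
  obtain ⟨i, j⟩ := p
  have hmax : ∀ k l, ‖x k - x l‖ ≤ ‖x i - x j‖ := by
    intro k l; exact hp (k, l) (Finset.mem_univ _)
  have hdne : x i ≠ x j := by
    intro h
    apply hab
    have := hmax a b
    rw [h, sub_self, norm_zero] at this
    have : ‖x a - x b‖ = 0 := le_antisymm this (by positivity)
    rw [norm_eq_zero, sub_eq_zero] at this
    exact this
  have hij : i ≠ j := fun h => hdne (by rw [h])
  refine ⟨i, j, hdne, ?_⟩
  set d : ℂ := x i - x j with hd
  have hd0 : d ≠ 0 := sub_ne_zero.mpr hdne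
  have habs : 0 < ‖d‖ := norm_pos_iff.mpr hd0
  set S := Finset.univ.filter (fun k => k ≠ i ∧ k ≠ j) with hS
  set c : ℝ := Y i j + Y j i + ∑ k ∈ S, min (Y i k) (Y j k) with hc
  have hcpos : 0 < c := hmin i j hij
  rw [key_identity Y hzero i j hij x]
  -- compute real part
  have hmc : -((Y i j : ℂ) + (Y j i : ℂ) + ((∑ k ∈ S, min (Y i k) (Y j k) : ℝ) : ℂ)) = ((-c : ℝ) : ℂ) := by
    rw [hc]; push_cast [Complex.ofReal_sum]; ring
  rw [← hS, hmc, mul_add, Complex.add_re]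
  have hterm1 : ((starRingEnd ℂ) d * (((-c : ℝ) : ℂ) * d)).re = -c * Complex.normSq d := by
    have : (starRingEnd ℂ) d * (((-c : ℝ) : ℂ) * d) = ((-c : ℝ) : ℂ) * ((starRingEnd ℂ) d * d) := by ring
    rw [this, show (starRingEnd ℂ) d * d = ((Complex.normSq d : ℝ) : ℂ) by
      rw [mul_comm, Complex.mul_conj], ← Complex.ofReal_mul, Complex.ofReal_re]
  rw [hterm1, Finset.mul_sum, Complex.re_sum]
  have hsum_le : ∑ k ∈ S, ((starRingEnd ℂ) d * (((Y i k - min (Y i k) (Y j k) : ℝ) : ℂ) * (x k - x i)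
      + ((Y j k - min (Y i k) (Y j k) : ℝ) : ℂ) * (x j - x k))).re ≤ 0 := by
    apply Finset.sum_nonpos
    intro k _
    rw [mul_add, Complex.add_re]
    have key1 : ((starRingEnd ℂ) d * (x k - x i)).re ≤ 0 := by
      have e : (starRingEnd ℂ) d * (x k - x i)
          = (starRingEnd ℂ) d * (x k - x j) - (starRingEnd ℂ) d * d := by
        rw [hd]; ring
      rw [e, Complex.sub_re]
      have h1 : ((starRingEnd ℂ) d * (x k - x j)).re ≤ ‖d‖ * ‖d‖ := by
        calc ((starRingEnd ℂ) d * (x k - x j)).re ≤ ‖(starRingEnd ℂ) d * (x k - x j)‖ :=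
              Complex.re_le_norm _
          _ = ‖d‖ * ‖x k - x j‖ := by rw [norm_mul, Complex.norm_conj]
          _ ≤ ‖d‖ * ‖d‖ := by
              exact mul_le_mul_of_nonneg_left (hmax k j) (norm_nonneg d)
      have h2 : ((starRingEnd ℂ) d * d).re = ‖d‖ * ‖d‖ := by
        rw [show (starRingEnd ℂ) d * d = ((Complex.normSq d : ℝ) : ℂ) by rw [mul_comm, Complex.mul_conj]]
        rw [Complex.ofReal_re, Complex.normSq_eq_norm_sq, sq]
      linarith
    have key2 : ((starRingEnd ℂ) d * (x j - x k)).re ≤ 0 := by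
      have e : (starRingEnd ℂ) d * (x j - x k)
          = (starRingEnd ℂ) d * (x i - x k) - (starRingEnd ℂ) d * d := by
        rw [hd]; ring
      rw [e, Complex.sub_re]
      have h1 : ((starRingEnd ℂ) d * (x i - x k)).re ≤ ‖d‖ * ‖d‖ := by
        calc ((starRingEnd ℂ) d * (x i - x k)).re ≤ ‖(starRingEnd ℂ) d * (x i - x k)‖ :=
              Complex.re_le_norm _
          _ = ‖d‖ * ‖x i - x k‖ := by rw [norm_mul, Complex.norm_conj]
          _ ≤ ‖d‖ * ‖d‖ := by
              exact mul_le_mul_of_nonneg_left (hmax i k) (norm_nonneg d)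
      have h2 : ((starRingEnd ℂ) d * d).re = ‖d‖ * ‖d‖ := by
        rw [show (starRingEnd ℂ) d * d = ((Complex.normSq d : ℝ) : ℂ) by rw [mul_comm, Complex.mul_conj]]
        rw [Complex.ofReal_re, Complex.normSq_eq_norm_sq, sq]
      linarith
    have hp1 : (0:ℝ) ≤ Y i k - min (Y i k) (Y j k) := by
      simp [min_le_left]
    have hp2 : (0:ℝ) ≤ Y j k - min (Y i k) (Y j k) := by
      simp [min_le_right]
    have e1 : ((starRingEnd ℂ) d * (((Y i k - min (Y i k) (Y j k) : ℝ) : ℂ) * (x k - x i))).re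
        = (Y i k - min (Y i k) (Y j k)) * ((starRingEnd ℂ) d * (x k - x i)).re := by
      rw [show (starRingEnd ℂ) d * (((Y i k - min (Y i k) (Y j k) : ℝ) : ℂ) * (x k - x i))
          = ((Y i k - min (Y i k) (Y j k) : ℝ) : ℂ) * ((starRingEnd ℂ) d * (x k - x i)) by ring]
      exact Complex.re_ofReal_mul _ _
    have e2 : ((starRingEnd ℂ) d * (((Y j k - min (Y i k) (Y j k) : ℝ) : ℂ) * (x j - x k))).re
        = (Y j k - min (Y i k) (Y j k)) * ((starRingEnd ℂ) d * (x j - x k)).re := by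
      rw [show (starRingEnd ℂ) d * (((Y j k - min (Y i k) (Y j k) : ℝ) : ℂ) * (x j - x k))
          = ((Y j k - min (Y i k) (Y j k) : ℝ) : ℂ) * ((starRingEnd ℂ) d * (x j - x k)) by ring]
      exact Complex.re_ofReal_mul _ _
    rw [e1, e2]
    have := mul_nonpos_of_nonneg_of_nonpos hp1 key1
    have := mul_nonpos_of_nonneg_of_nonpos hp2 key2
    linarith
  have hnormSq : 0 < Complex.normSq d := Complex.normSq_pos.mpr hd0
  nlinarith [mul_pos hcpos hnormSq]

theorem stmt16
    (m : ℕ) (hm : 1 ≤ m)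
    (Y : Matrix (Fin m) (Fin m) ℝ)
    -- zero row sums: `y_{ii} = -Σ_{j≠i} y_{ij}`
    (hrow : ∀ i, Y i i = -∑ j ∈ Finset.univ.filter (fun j => j ≠ i), Y i j)
    -- `min_{i≠j} { y_{ij} + y_{ji} + Σ_{k≠i,j} min(y_{ik}, y_{jk}) } > 0`
    (hmin : ∀ i j : Fin m, i ≠ j →
      0 < Y i j + Y j i +
        ∑ k ∈ Finset.univ.filter (fun k => k ≠ i ∧ k ≠ j),
          min (Y i k) (Y j k)) :
    Polynomial.rootMultiplicity 0
      (Matrix.charpoly (Y.map fun x : ℝ => (x : ℂ))) = 1 ∧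
    ∀ μ : ℂ, μ ∈ (Matrix.charpoly (Y.map fun x : ℝ => (x : ℂ))).roots →
      μ ≠ 0 → μ.re < 0 := by
  have hzero : ∀ i, ∑ k, Y i k = 0 := by
    intro i
    have he : Finset.univ.erase i = Finset.univ.filter (fun j => j ≠ i) := by
      ext k; simp [Finset.mem_erase]
    rw [← Finset.add_sum_erase _ _ (Finset.mem_univ i), he, hrow i, neg_add_cancel]
  set A := Y.map (fun x : ℝ => (x : ℂ)) with hA
  have hAapp : ∀ i k, A i k = ((Y i k : ℝ) : ℂ) := fun i k => rfl
  have hzeroC : ∀ i, ∑ k, ((Y i k : ℝ) : ℂ) = 0 := by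
    intro i
    rw [← Complex.ofReal_sum, hzero i, Complex.ofReal_zero]
  have hdiff : ∀ (x : Fin m → ℂ) (i j : Fin m),
      (A.mulVec x) i - (A.mulVec x) j = ∑ k, ((Y i k : ℂ) - (Y j k : ℂ)) * x k := by
    intro x i j
    simp [Matrix.mulVec, dotProduct, hAapp, sub_mul, Finset.sum_sub_distrib]
  -- constant vectors are killed
  have hconstkill : ∀ (x : Fin m → ℂ), (∀ a b, x a = x b) → A.mulVec x = 0 := by
    intro x hx
    funext i
    have : ∀ k, A i k * x k = ((Y i k : ℝ) : ℂ) * x i := by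
      intro k; rw [hAapp, hx k i]
    simp only [Matrix.mulVec, dotProduct]
    rw [Finset.sum_congr rfl (fun k _ => this k), ← Finset.sum_mul, hzeroC, zero_mul,
      Pi.zero_apply]
  -- vectors mapped to constants are constant
  have hker : ∀ (x : Fin m → ℂ) (t : ℂ), A.mulVec x = (fun _ => t) → ∀ a b, x a = x b := by
    intro x t hx a b
    by_contra hab
    obtain ⟨i, j, hne, hre⟩ := key_ineq Y hzero hmin x a b hab
    rw [← hdiff, hx] at hre
    simp at hre
  constructor
  · -- multiplicity part
    have i0 : Fin m := ⟨0, hm⟩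
    have hrowX : ∀ i, ∑ k, charmatrix A i k = Polynomial.X := by
      intro i
      have hterm : ∀ k, charmatrix A i k
          = (if i = k then Polynomial.X else 0) - Polynomial.C (A i k) := by
        intro k
        by_cases h : i = k
        · subst h; simp [charmatrix_apply_eq]
        · simp [charmatrix_apply_ne _ _ _ h, h]
      rw [Finset.sum_congr rfl (fun k _ => hterm k), Finset.sum_sub_distrib,
        Finset.sum_ite_eq Finset.univ i (fun _ => Polynomial.X), ← map_sum]
      have hz : ∑ k, A i k = 0 := by
        simpa [hAapp] using hzeroC i
      rw [hz]
      simp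
    set Q := ((charmatrix A).updateCol i0 (fun _ => 1)).det with hQdef
    have hQ : Matrix.charpoly A = Polynomial.X * Q := by
      have h1 := Matrix.det_updateCol_sum (charmatrix A) i0 (fun _ => (1 : Polynomial ℂ))
      simp only [one_smul, hrowX] at h1
      have h2 := Matrix.det_updateCol_smul (charmatrix A) i0 Polynomial.X
        (fun _ => (1 : Polynomial ℂ))
      rw [show (Polynomial.X • fun _ : Fin m => (1 : Polynomial ℂ))
          = (fun _ : Fin m => Polynomial.X) from funext fun _ => by simp] at h2
      rw [show Matrix.charpoly A = (charmatrix A).det from rfl, ← h1, h2, hQdef]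
    have hQ0 : Q.eval 0 ≠ 0 := by
      set M0 : Matrix (Fin m) (Fin m) ℂ := fun i k => if k = i0 then 1 else -(A i k) with hM0
      have hmap : Q.eval 0 = M0.det := by
        have h3 := (Polynomial.evalRingHom (0 : ℂ)).map_det
          ((charmatrix A).updateCol i0 (fun _ => 1))
        have hmm : (Polynomial.evalRingHom (0 : ℂ)).mapMatrix
            ((charmatrix A).updateCol i0 (fun _ => 1)) = M0 := by
          ext i k
          by_cases h : k = i0
          · subst h
            simp [RingHom.mapMatrix_apply, Matrix.map_apply, Matrix.updateCol_apply, hM0]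
          · by_cases h2 : i = k
            · subst h2
              simp [RingHom.mapMatrix_apply, Matrix.map_apply, Matrix.updateCol_apply, h,
                charmatrix_apply_eq, hM0]
            · simp [RingHom.mapMatrix_apply, Matrix.map_apply, Matrix.updateCol_apply, h,
                charmatrix_apply_ne _ _ _ h2, hM0]
        rw [hmm] at h3
        exact h3
      intro h0
      have hdet0 : M0.det = 0 := by rw [← hmap]; exact h0
      obtain ⟨v, hv0, hv⟩ := Matrix.exists_mulVec_eq_zero_iff.mpr hdet0
      set w : Fin m → ℂ := fun k => if k = i0 then 0 else v k with hw
      have hAw : A.mulVec w = fun _ => v i0 := by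
        funext i
        have hpt : ∀ k, (if k = i0 then 1 else -(A i k)) * v k
            + A i k * (if k = i0 then 0 else v k) = (if k = i0 then v i0 else 0) := by
          intro k
          by_cases h : k = i0
          · subst h; simp
          · simp only [if_neg h]; ring
        have hsum : (M0.mulVec v) i + (A.mulVec w) i = v i0 := by
          simp only [Matrix.mulVec, dotProduct, hM0, hw]
          rw [← Finset.sum_add_distrib, Finset.sum_congr rfl (fun k _ => hpt k),
            Finset.sum_ite_eq' Finset.univ i0 (fun _ => v i0), if_pos (Finset.mem_univ i0)]
        rw [hv] at hsum
        simpa using hsum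
      have hwc := hker w (v i0) hAw
      have hw0 : ∀ k, w k = 0 := by
        intro k
        rw [hwc k i0]
        simp [hw]
      have hvi0 : v i0 = 0 := by
        have h := congrFun hAw i0
        rw [show w = (0 : Fin m → ℂ) from funext hw0] at h
        rw [Matrix.mulVec_zero] at h
        simpa using h.symm
      apply hv0
      funext k
      by_cases h : k = i0
      · subst h; exact hvi0
      · have := hw0 k
        simpa [hw, h] using this
    have hne : Polynomial.X * Q ≠ 0 := by
      rw [← hQ]; exact (Matrix.charpoly_monic A).ne_zero
    rw [hQ, Polynomial.rootMultiplicity_mul hne]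
    have hX : Polynomial.rootMultiplicity (0 : ℂ) Polynomial.X = 1 := by
      simpa using Polynomial.rootMultiplicity_X_sub_C_self (x := (0 : ℂ))
    have hQm : Polynomial.rootMultiplicity (0 : ℂ) Q = 0 :=
      Polynomial.rootMultiplicity_eq_zero (fun h => hQ0 h)
    rw [hX, hQm]
  · -- roots part
    intro μ hμ hμ0
    have hp0 : Matrix.charpoly A ≠ 0 := (Matrix.charpoly_monic A).ne_zero
    have hroot : (Matrix.charpoly A).IsRoot μ := (Polynomial.mem_roots'.mp hμ).2
    -- eval μ charpoly = det (μ • 1 - A)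
    have hdet : (μ • (1 : Matrix (Fin m) (Fin m) ℂ) - A).det = 0 := by
      have h1 : (μ • (1 : Matrix (Fin m) (Fin m) ℂ) - A)
          = (Polynomial.evalRingHom μ).mapMatrix (charmatrix A) := by
        ext i k
        by_cases h : i = k
        · subst h
          simp [charmatrix_apply_eq, RingHom.mapMatrix_apply, Matrix.map_apply]
        · simp [charmatrix_apply_ne _ _ _ h, Matrix.one_apply_ne h,
            RingHom.mapMatrix_apply, Matrix.map_apply]
      have h2 : (Polynomial.evalRingHom μ) (charmatrix A).det = 0 := hroot
      rw [h1, ← RingHom.map_det]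
      exact h2
    obtain ⟨v, hv0, hv⟩ := Matrix.exists_mulVec_eq_zero_iff.mpr hdet
    have hAv : A.mulVec v = μ • v := by
      have := hv
      rw [Matrix.sub_mulVec, Matrix.smul_mulVec, Matrix.one_mulVec, sub_eq_zero] at this
      exact this.symm
    by_cases hc : ∀ a b, v a = v b
    · exfalso
      have := hconstkill v hc
      rw [this] at hAv
      rcases smul_eq_zero.mp hAv.symm with h | h
      · exact hμ0 h
      · exact hv0 h
    · push_neg at hc
      obtain ⟨a, b, hab⟩ := hc
      obtain ⟨i, j, hne, hre⟩ := key_ineq Y hzero hmin v a b hab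
      rw [← hdiff, hAv] at hre
      have hd0 : v i - v j ≠ 0 := sub_ne_zero.mpr hne
      have hsq : 0 < Complex.normSq (v i - v j) := Complex.normSq_pos.mpr hd0
      have he : (starRingEnd ℂ) (v i - v j) * ((μ • v) i - (μ • v) j)
          = μ * ((Complex.normSq (v i - v j) : ℝ) : ℂ) := by
        simp only [Pi.smul_apply, smul_eq_mul]
        rw [show (starRingEnd ℂ) (v i - v j) * (μ * v i - μ * v j)
            = μ * ((v i - v j) * (starRingEnd ℂ) (v i - v j)) by ring, Complex.mul_conj]
      rw [he] at hre
      have hre' : μ.re * Complex.normSq (v i - v j) < 0 := by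
        simpa [Complex.mul_re] using hre
      nlinarith
end

section
/- Let b_{ij} : [0,∞) → ℝ (i ≠ j, i,j ∈ {1,…,m}) be continuous functions of arbitrary sign, and let δ : [0,∞) → ℝ^m be a solution of the linear time-varying system δ̇_i = Σ_{j≠i} b_{ij}(t)·(δ_j − δ_i). Define ξ(t) = −min_{i≠j} { b_{ij}(t) + b_{ji}(t) + Σ_{k≠i,j} min(b_{ik}(t), b_{jk}(t)) } and V(δ) = max_i δ_i − min_i δ_i. Then V(δ(t)) ≤ exp(∫_0^t ξ(s) ds)·V(δ(0)) for all t ≥ 0. -/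
open scoped BigOperators

/-- `ξ(t) = -min_{i≠j} { b_{ij}(t) + b_{ji}(t) + Σ_{k≠i,j} min(b_{ik}(t), b_{jk}(t)) }`. -/
noncomputable def xi19 (m : ℕ) (b : Fin m → Fin m → ℝ → ℝ) (t : ℝ) : ℝ :=
  -sInf {x : ℝ | ∃ i j : Fin m, i ≠ j ∧
    x = b i j t + b j i t +
      ∑ k ∈ Finset.univ.filter (fun k => k ≠ i ∧ k ≠ j),
        min (b i k t) (b j k t)}

/-- `V(δ) = max_i δ_i - min_i δ_i`. -/
noncomputable def Vdiam (m : ℕ) (δ : Fin m → ℝ) : ℝ :=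
  (⨆ i : Fin m, δ i) - ⨅ i : Fin m, δ i

/-- Elementary per-term estimate. -/
lemma term_bound19 (c d u vi vj : ℝ) (h1 : vj ≤ u) (h2 : u ≤ vi) :
    c * (u - vi) - d * (u - vj) ≤ -(min c d) * (vi - vj) := by
  rcases le_total c d with h | h
  · rw [min_eq_left h]; nlinarith
  · rw [min_eq_right h]; nlinarith

theorem stmt19
    (m : ℕ) (hm : 2 ≤ m)
    (b : Fin m → Fin m → ℝ → ℝ)
    (hbc : ∀ i j, ContinuousOn (b i j) (Set.Ici 0))
    (δ : ℝ → Fin m → ℝ)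
    (hδ : ∀ (i : Fin m) (t : ℝ), 0 ≤ t →
      HasDerivAt (fun s => δ s i)
        (∑ j ∈ Finset.univ.filter (fun j => j ≠ i),
          b i j t * (δ t j - δ t i)) t) :
    ∀ t, 0 ≤ t →
      Vdiam m (δ t) ≤
        Real.exp (∫ s in (0:ℝ)..t, xi19 m b s) * Vdiam m (δ 0) := by
  haveI : NeZero m := ⟨by omega⟩
  have hmlt : (1 : ℕ) < m := hm
  set n0 : Fin m := ⟨0, by omega⟩ with hn0
  set n1 : Fin m := ⟨1, by omega⟩ with hn1
  have h01 : n0 ≠ n1 := by simp [hn0, hn1, Fin.ext_iff]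
  -- finset formulation of xi19
  set F : Fin m × Fin m → ℝ → ℝ := fun p t => b p.1 p.2 t + b p.2 p.1 t +
      ∑ k ∈ Finset.univ.filter (fun k => k ≠ p.1 ∧ k ≠ p.2),
        min (b p.1 k t) (b p.2 k t) with hFdef
  set P : Finset (Fin m × Fin m) := Finset.univ.filter (fun p => p.1 ≠ p.2) with hPdef
  have hPmem : ∀ p : Fin m × Fin m, p ∈ P ↔ p.1 ≠ p.2 := by
    intro p; simp [hPdef]
  have hP : P.Nonempty := ⟨(n0, n1), (hPmem _).2 h01⟩
  have hxi : ∀ t, xi19 m b t = -(P.inf' hP fun p => F p t) := by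
    intro t
    have hset : {x : ℝ | ∃ i j : Fin m, i ≠ j ∧
        x = b i j t + b j i t +
          ∑ k ∈ Finset.univ.filter (fun k => k ≠ i ∧ k ≠ j),
            min (b i k t) (b j k t)} = (fun p => F p t) '' ↑P := by
      ext x
      constructor
      · rintro ⟨i, j, hij, rfl⟩
        exact ⟨(i, j), (hPmem _).2 hij, rfl⟩
      · rintro ⟨p, hp, rfl⟩
        exact ⟨p.1, p.2, (hPmem _).1 hp, rfl⟩
    rw [xi19, hset, ← Finset.inf'_eq_csInf_image P hP]
  -- continuity of xi19 on [0, ∞)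
  have hξc : ContinuousOn (xi19 m b) (Set.Ici 0) := by
    have h1 : ContinuousOn (fun t => P.inf' hP fun p => F p t) (Set.Ici 0) := by
      apply ContinuousOn.finset_inf'_apply hP
      intro p _
      apply ContinuousOn.add
      · exact (hbc _ _).add (hbc _ _)
      · apply continuousOn_finset_sum
        intro k _
        exact (hbc _ _).inf (hbc _ _)
    have : ContinuousOn (fun t => -(P.inf' hP fun p => F p t)) (Set.Ici 0) := h1.neg
    exact this.congr fun t _ => hxi t
  -- the pairwise differences and the diameter function
  set g : Fin m × Fin m → ℝ → ℝ := fun p t => δ t p.1 - δ t p.2 with hgdef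
  have hQ : (Finset.univ : Finset (Fin m × Fin m)).Nonempty := ⟨(n0, n1), Finset.mem_univ _⟩
  set f : ℝ → ℝ := fun t => Finset.univ.sup' hQ (fun p => g p t) with hfdef
  have hVd : ∀ t, Vdiam m (δ t) = f t := by
    intro t
    have hs : (⨆ i, δ t i) = Finset.univ.sup' Finset.univ_nonempty (fun i => δ t i) :=
      (Finset.sup'_univ_eq_ciSup _).symm
    have hi : (⨅ i, δ t i) = Finset.univ.inf' Finset.univ_nonempty (fun i => δ t i) :=
      (Finset.inf'_univ_eq_ciInf _).symm
    rw [Vdiam, hs, hi]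
    apply le_antisymm
    · obtain ⟨i, _, hieq⟩ := Finset.exists_mem_eq_sup' Finset.univ_nonempty (fun i => δ t i)
      obtain ⟨j, _, hjeq⟩ := Finset.exists_mem_eq_inf' Finset.univ_nonempty (fun i => δ t i)
      rw [hieq, hjeq]
      exact Finset.le_sup' (fun p => g p t) (Finset.mem_univ (i, j))
    · apply Finset.sup'_le
      rintro ⟨i, j⟩ _
      exact sub_le_sub (Finset.le_sup' (fun i => δ t i) (Finset.mem_univ i))
        (Finset.inf'_le (fun i => δ t i) (Finset.mem_univ j))
  have hfnn : ∀ t, 0 ≤ f t := by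
    intro t
    calc (0:ℝ) = g (n0, n0) t := by simp [hgdef]
      _ ≤ f t := Finset.le_sup' (fun p => g p t) (Finset.mem_univ (n0, n0))
  -- continuity of δ and f
  have hδc : ∀ i : Fin m, ContinuousOn (fun s => δ s i) (Set.Ici 0) := fun i t ht =>
    ((hδ i t ht).continuousAt).continuousWithinAt
  have hfc : ContinuousOn f (Set.Ici 0) := by
    apply ContinuousOn.finset_sup'_apply hQ
    intro p _
    exact (hδc p.1).sub (hδc p.2)
  -- derivative of g p
  set D : Fin m × Fin m → ℝ → ℝ := fun p t =>
      (∑ k ∈ Finset.univ.filter (fun k => k ≠ p.1), b p.1 k t * (δ t k - δ t p.1)) -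
      (∑ k ∈ Finset.univ.filter (fun k => k ≠ p.2), b p.2 k t * (δ t k - δ t p.2)) with hDdef
  have hgd : ∀ (p : Fin m × Fin m) (t : ℝ), 0 ≤ t → HasDerivAt (g p) (D p t) t := by
    intro p t ht
    exact (hδ p.1 t ht).sub (hδ p.2 t ht)
  -- key differential inequality at argmax pairs
  have hkey : ∀ (p : Fin m × Fin m) (t : ℝ), 0 ≤ t → g p t = f t →
      D p t ≤ xi19 m b t * f t := by
    intro p t ht hmax
    by_cases hpp : p.1 = p.2
    · have hf0 : f t = 0 := by rw [← hmax]; simp [hgdef, hpp]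
      have hD0 : D p t = 0 := by simp [hDdef, hpp]
      rw [hD0, hf0, mul_zero]
    · obtain ⟨i, j⟩ := p
      simp only at hpp
      have hfij : δ t i - δ t j = f t := hmax
      have hmaxk : ∀ k, δ t k ≤ δ t i := by
        intro k
        have h1 : g (k, j) t ≤ f t := Finset.le_sup' (fun p => g p t) (Finset.mem_univ (k, j))
        rw [← hfij] at h1
        simp only [hgdef] at h1
        linarith
      have hmink : ∀ k, δ t j ≤ δ t k := by
        intro k
        have h1 : g (i, k) t ≤ f t := Finset.le_sup' (fun p => g p t) (Finset.mem_univ (i, k))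
        rw [← hfij] at h1
        simp only [hgdef] at h1
        linarith
      set s : Finset (Fin m) := Finset.univ.filter (fun k => k ≠ i ∧ k ≠ j) with hsdef
      have hs1 : (Finset.univ.filter (fun k => k ≠ i)).erase j = s := by
        ext k
        simp only [hsdef, Finset.mem_erase, Finset.mem_filter, Finset.mem_univ, true_and,
          and_comm]
      have hs2 : (Finset.univ.filter (fun k => k ≠ j)).erase i = s := by
        ext k
        simp only [hsdef, Finset.mem_erase, Finset.mem_filter, Finset.mem_univ, true_and,
          and_comm]
      have hj1 : j ∈ Finset.univ.filter (fun k => k ≠ i) := by simp [Ne.symm hpp]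
      have hi2 : i ∈ Finset.univ.filter (fun k => k ≠ j) := by simp [hpp]
      have hsum1 : ∑ k ∈ Finset.univ.filter (fun k => k ≠ i), b i k t * (δ t k - δ t i) =
          (∑ k ∈ s, b i k t * (δ t k - δ t i)) + b i j t * (δ t j - δ t i) := by
        rw [← Finset.sum_erase_add _ _ hj1, hs1]
      have hsum2 : ∑ k ∈ Finset.univ.filter (fun k => k ≠ j), b j k t * (δ t k - δ t j) =
          (∑ k ∈ s, b j k t * (δ t k - δ t j)) + b j i t * (δ t i - δ t j) := by
        rw [← Finset.sum_erase_add _ _ hi2, hs2]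
      have hterm : ∀ k ∈ s, b i k t * (δ t k - δ t i) - b j k t * (δ t k - δ t j) ≤
          -(min (b i k t) (b j k t)) * (δ t i - δ t j) := by
        intro k _
        exact term_bound19 _ _ _ _ _ (hmink k) (hmaxk k)
      have hsumle : ∑ k ∈ s, (b i k t * (δ t k - δ t i) - b j k t * (δ t k - δ t j)) ≤
          ∑ k ∈ s, -(min (b i k t) (b j k t)) * (δ t i - δ t j) :=
        Finset.sum_le_sum hterm
      have hDle : D (i, j) t ≤ -(F (i, j) t) * (δ t i - δ t j) := by
        have hexp : D (i, j) t =
            (∑ k ∈ s, (b i k t * (δ t k - δ t i) - b j k t * (δ t k - δ t j))) +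
            (b i j t * (δ t j - δ t i) - b j i t * (δ t i - δ t j)) := by
          simp only [hDdef]
          rw [hsum1, hsum2, Finset.sum_sub_distrib]
          ring
        have hFexp : -(F (i, j) t) * (δ t i - δ t j) =
            (∑ k ∈ s, -(min (b i k t) (b j k t)) * (δ t i - δ t j)) +
            (b i j t * (δ t j - δ t i) - b j i t * (δ t i - δ t j)) := by
          simp only [hFdef, hsdef]
          rw [← Finset.sum_mul, Finset.sum_neg_distrib]
          ring
        rw [hexp, hFexp]
        exact add_le_add hsumle le_rfl
      have hFle : -(F (i, j) t) ≤ xi19 m b t := by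
        rw [hxi t]
        exact neg_le_neg (Finset.inf'_le _ ((hPmem (i, j)).2 hpp))
      calc D (i, j) t ≤ -(F (i, j) t) * (δ t i - δ t j) := hDle
        _ = -(F (i, j) t) * f t := by rw [hfij]
        _ ≤ xi19 m b t * f t := mul_le_mul_of_nonneg_right hFle (hfnn t)
  -- the liminf slope estimate
  have hslope : ∀ x : ℝ, 0 ≤ x → ∀ r, xi19 m b x * f x < r →
      ∃ᶠ z in nhdsWithin x (Set.Ioi x), slope f x z < r := by
    intro x hx r hr
    have hatt : ∃ p : Fin m × Fin m, ∃ᶠ z in nhdsWithin x (Set.Ioi x), f z = g p z := by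
      by_contra hc
      push_neg at hc
      have hev : ∀ p : Fin m × Fin m, ∀ᶠ z in nhdsWithin x (Set.Ioi x), f z ≠ g p z := by
        intro p
        have := hc p
        exact this
      have hall : ∀ᶠ z in nhdsWithin x (Set.Ioi x),
          ∀ p ∈ (Finset.univ : Finset (Fin m × Fin m)), f z ≠ g p z :=
        (Filter.eventually_all_finset _).2 fun p _ => hev p
      obtain ⟨z, hz⟩ := hall.exists
      obtain ⟨p, hp, hpe⟩ := Finset.exists_mem_eq_sup' hQ (fun p => g p z)
      exact hz p hp hpe
    obtain ⟨p, hfreq⟩ := hatt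
    have hsub : Set.Ioi x ⊆ Set.Ici (0 : ℝ) := fun z hz => le_of_lt (lt_of_le_of_lt hx hz)
    have h1 : Filter.Tendsto f (nhdsWithin x (Set.Ioi x)) (nhds (f x)) :=
      Filter.Tendsto.mono_left (hfc x hx) (nhdsWithin_mono x hsub)
    have h2 : Filter.Tendsto (g p) (nhdsWithin x (Set.Ioi x)) (nhds (g p x)) := by
      have : ContinuousAt (g p) x :=
        ((hδ p.1 x hx).continuousAt).sub ((hδ p.2 x hx).continuousAt)
      exact this.tendsto.mono_left nhdsWithin_le_nhds
    have hfx : g p x = f x :=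
      tendsto_nhds_unique_of_frequently_eq h2 h1 (hfreq.mono fun z h => h.symm)
    have hDlt : D p x < r := lt_of_le_of_lt (hkey p x hx hfx) hr
    have hsl : Filter.Tendsto (slope (g p) x) (nhdsWithin x {x}ᶜ) (nhds (D p x)) :=
      hasDerivAt_iff_tendsto_slope.1 (hgd p x hx)
    have hsl' : Filter.Tendsto (slope (g p) x) (nhdsWithin x (Set.Ioi x)) (nhds (D p x)) :=
      hsl.mono_left (nhdsWithin_mono x fun z hz => ne_of_gt hz)
    have hev : ∀ᶠ z in nhdsWithin x (Set.Ioi x), slope (g p) x z < r :=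
      hsl'.eventually_lt_const hDlt
    refine (hfreq.and_eventually hev).mono ?_
    rintro z ⟨hz1, hz2⟩
    have : slope f x z = slope (g p) x z := by
      rw [slope_def_field, slope_def_field, hz1, hfx]
    rwa [this]
  -- the Grönwall argument
  intro T hT
  rw [hVd T, hVd 0]
  have hIic : Set.Icc (0:ℝ) T ⊆ Set.Ici 0 := fun z hz => hz.1
  have hIint : IntervalIntegrable (xi19 m b) MeasureTheory.volume 0 T := by
    apply ContinuousOn.intervalIntegrable
    rw [Set.uIcc_of_le hT]
    exact hξc.mono hIic
  have key : ∀ ε : ℝ, 0 < ε →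
      f T ≤ (f 0 + ε) * Real.exp ((∫ s in (0:ℝ)..T, xi19 m b s) + ε * T) := by
    intro ε hε
    set I : ℝ → ℝ := fun t => ∫ s in (0:ℝ)..t, xi19 m b s with hIdef
    set B : ℝ → ℝ := fun t => (f 0 + ε) * Real.exp (I t + ε * t) with hBdef
    have hIcont : ContinuousOn I (Set.Icc 0 T) := by
      have h1 : MeasureTheory.IntegrableOn (xi19 m b) (Set.uIcc 0 T) MeasureTheory.volume := by
        rw [Set.uIcc_of_le hT]
        exact (hξc.mono hIic).integrableOn_Icc
      have := intervalIntegral.continuousOn_primitive_interval h1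
      rwa [Set.uIcc_of_le hT] at this
    have hBc : ContinuousOn B (Set.Icc 0 T) := by
      apply ContinuousOn.mul continuousOn_const
      exact (hIcont.add ((continuous_const.mul continuous_id).continuousOn)).rexp
    have hBpos : ∀ x, 0 < B x := by
      intro x
      have : 0 < f 0 + ε := lt_of_lt_of_le hε (le_add_of_nonneg_left (hfnn 0))
      positivity
    have hB' : ∀ x ∈ Set.Ico (0:ℝ) T, HasDerivWithinAt B ((xi19 m b x + ε) * B x) (Set.Ici x) x := by
      intro x hx
      have hint : IntervalIntegrable (xi19 m b) MeasureTheory.volume 0 x := by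
        apply ContinuousOn.intervalIntegrable
        rw [Set.uIcc_of_le hx.1]
        exact hξc.mono fun z hz => hz.1
      have hmeas : StronglyMeasurableAtFilter (xi19 m b) (nhdsWithin x (Set.Ioi x))
          MeasureTheory.volume := by
        refine ⟨Set.Ici 0, ?_, hξc.aestronglyMeasurable measurableSet_Ici⟩
        exact Filter.mem_of_superset self_mem_nhdsWithin fun z hz => le_of_lt (lt_of_le_of_lt hx.1 hz)
      have hcont : ContinuousWithinAt (xi19 m b) (Set.Ioi x) x :=
        (hξc x hx.1).mono fun z hz => le_of_lt (lt_of_le_of_lt hx.1 hz)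
      have hI : HasDerivWithinAt I (xi19 m b x) (Set.Ici x) x :=
        intervalIntegral.integral_hasDerivWithinAt_right hint hmeas hcont
      have hlin : HasDerivWithinAt (fun t : ℝ => ε * t) ε (Set.Ici x) x := by
        simpa using ((hasDerivWithinAt_id x (Set.Ici x)).const_mul ε)
      have h1 : HasDerivWithinAt (fun t => I t + ε * t) (xi19 m b x + ε) (Set.Ici x) x :=
        hI.add hlin
      have h2 := (h1.exp).const_mul (f 0 + ε)
      refine h2.congr_deriv ?_
      show _ = (xi19 m b x + ε) * ((f 0 + ε) * Real.exp (I x + ε * x))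
      ring
    have hbound : ∀ x ∈ Set.Ico (0:ℝ) T, f x = B x →
        xi19 m b x * f x < (xi19 m b x + ε) * B x := by
      intro x _ hfB
      rw [hfB]
      have := hBpos x
      nlinarith
    have ha : f 0 ≤ B 0 := by
      simp only [hBdef, hIdef]
      rw [intervalIntegral.integral_same]
      simp only [mul_zero, add_zero, Real.exp_zero, mul_one]
      linarith
    have := image_le_of_liminf_slope_right_lt_deriv_boundary'
      (f := f) (f' := fun x => xi19 m b x * f x) (B := B)
      (B' := fun x => (xi19 m b x + ε) * B x)
      (hfc.mono hIic) (fun x hx r hr => hslope x hx.1 r hr) ha hBc hB' hbound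
      (Set.right_mem_Icc.2 hT)
    simpa [hBdef, hIdef] using this
  -- take ε → 0⁺
  have hlim : Filter.Tendsto
      (fun ε : ℝ => (f 0 + ε) * Real.exp ((∫ s in (0:ℝ)..T, xi19 m b s) + ε * T))
      (nhdsWithin 0 (Set.Ioi 0))
      (nhds (Real.exp (∫ s in (0:ℝ)..T, xi19 m b s) * f 0)) := by
    have hcont : Continuous
        (fun ε : ℝ => (f 0 + ε) * Real.exp ((∫ s in (0:ℝ)..T, xi19 m b s) + ε * T)) :=
      (continuous_const.add continuous_id).mul
        (Real.continuous_exp.comp (continuous_const.add (continuous_id.mul continuous_const)))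
    have := (hcont.tendsto 0).mono_left (nhdsWithin_le_nhds (s := Set.Ioi (0:ℝ)))
    simpa [mul_comm] using this
  refine ge_of_tendsto hlim ?_
  exact eventually_mem_nhdsWithin.mono fun ε hε => key ε hε
end
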